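/- Let n ≥ m ≥ 1 and let v_1 ≥ v_2 ≥ ⋯ ≥ v_n ≥ 0. Then the maximum over all allocations f : Fin n → Fin m of the time-sharing utility TS(f, v) (identical-basestations case) equals v_1 + v_2 + ⋯ + v_{m−1} + (1/(n−m+1))·(v_m + v_{m+1} + ⋯ + v_n), and this maximum is attained by the allocation that puts user j alone on basestation j for 1 ≤ j ≤ m−1 and puts users m, m+1, …, n all on basestation m. -/

import Mathlib

/-- Time-sharing utility of an allocation `f` of `n` users to `m` basestations with
weights `w i j`: each basestation's contribution is the sum of weights of its users
divided by its degree (empty basestations contribute `0`, via `0/0 = 0`). -/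
noncomputable def TS {n m : ℕ} (f : Fin n → Fin m) (w : Fin n → Fin m → ℝ) : ℝ :=
  ∑ j : Fin m, (∑ i ∈ Finset.univ.filter (fun i => f i = j), w i j) /
    ((Finset.univ.filter (fun i => f i = j)).card : ℝ)

open Finset

lemma hlp_filter_range (n k : ℕ) (h : k ≤ n) :
    (Finset.range n).filter (fun i => i < k) = Finset.range k := by
  ext x; simp; omega

lemma hlp_card_lt (n k : ℕ) (h : k ≤ n) :
    ((Finset.univ : Finset (Fin n)).filter (fun i : Fin n => (i : ℕ) < k)).card = k := by
  rw [Finset.card_filter]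
  rw [Fin.sum_univ_eq_sum_range (fun i => if i < k then 1 else 0) n]
  rw [← Finset.card_filter, hlp_filter_range n k h, Finset.card_range]

lemma hlp_abel (V a : ℕ → ℝ) (n : ℕ) (hV : ∀ k, V (k+1) ≤ V k) (hV0 : ∀ k, 0 ≤ V k)
    (hpre : ∀ k, k ≤ n → ∑ i ∈ Finset.range k, a i ≤ 0) :
    ∑ i ∈ Finset.range n, V i * a i ≤ 0 := by
  have h := Finset.sum_range_by_parts V a n
  simp only [smul_eq_mul] at h
  rw [h]
  have h1 : V (n-1) * (∑ i ∈ Finset.range n, a i) ≤ 0 :=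
    mul_nonpos_of_nonneg_of_nonpos (hV0 _) (hpre n le_rfl)
  have h2 : 0 ≤ ∑ i ∈ Finset.range (n-1), (V (i+1) - V i) * (∑ j ∈ Finset.range (i+1), a j) := by
    apply Finset.sum_nonneg
    intro i hi
    have hi' : i + 1 ≤ n := by have := Finset.mem_range.1 hi; omega
    rw [← neg_mul_neg]
    exact mul_nonneg (by linarith [hV i]) (by linarith [hpre _ hi'])
  linarith

lemma hlp_sum_range_eq (n k : ℕ) (h : k ≤ n) (F : Fin n → ℝ) :
    ∑ i ∈ Finset.range k, (if h' : i < n then F ⟨i, h'⟩ else 0)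
      = ∑ i ∈ Finset.univ.filter (fun i : Fin n => (i : ℕ) < k), F i := by
  rw [Finset.sum_filter]
  have : ∀ a : Fin n, (if (a : ℕ) < k then F a else 0)
      = (fun i => if i < k then (if h' : i < n then F ⟨i, h'⟩ else 0) else 0) (a : ℕ) := by
    intro a
    simp only [a.isLt, dif_pos, Fin.eta]
  rw [Finset.sum_congr rfl (fun a _ => this a)]
  rw [Fin.sum_univ_eq_sum_range (fun i => if i < k then (if h' : i < n then F ⟨i, h'⟩ else 0) else 0) n]
  rw [← Finset.sum_filter, hlp_filter_range n k h]

lemma hlp_W (n m N : ℕ) (hm : 1 ≤ m) (hmn : m ≤ n) (hN : N = n - m + 1)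
    (d : Fin m → ℕ) (hsum : ∑ j, d j = n) :
    ∑ j : Fin m, (if d j = 0 then 0 else N - d j) ≤ (m-1)*(N-1) := by
  have hN1 : 1 ≤ N := by omega
  set A := Finset.univ.filter (fun j : Fin m => d j ≠ 0 ∧ d j < N) with hA
  have hW : ∑ j : Fin m, (if d j = 0 then 0 else N - d j) = ∑ j ∈ A, (N - d j) := by
    rw [hA, Finset.sum_filter]
    apply Finset.sum_congr rfl
    intro j _
    split_ifs <;> omega
  rw [hW]
  by_cases hAc : A.card = m
  · have hAu : A = Finset.univ := Finset.eq_univ_of_card A (by rw [hAc]; simp)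
    have hmem : ∀ j : Fin m, d j ≠ 0 ∧ d j < N := by
      intro j
      have : j ∈ A := hAu ▸ Finset.mem_univ j
      simpa [hA] using this
    have hWn : (∑ j ∈ A, (N - d j)) + n = m * N := by
      rw [hAu, ← hsum, ← Finset.sum_add_distrib]
      rw [Finset.sum_congr rfl (fun j _ => Nat.sub_add_cancel (le_of_lt (hmem j).2))]
      simp [Finset.sum_const, mul_comm]
    zify [hm, hN1]
    have hWnZ : ((∑ j ∈ A, (N - d j) : ℕ) : ℤ) + (n:ℤ) = (m:ℤ) * N := by exact_mod_cast hWn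
    have hNZ : (N:ℤ) = (n:ℤ) - m + 1 := by
      have : (N:ℤ) = ((n - m : ℕ) : ℤ) + 1 := by exact_mod_cast hN
      rw [this, Nat.cast_sub hmn]
    have expand : ((m:ℤ)-1)*((N:ℤ)-1) = (m:ℤ)*N - m - N + 1 := by ring
    linarith
  · have hAle : A.card ≤ m - 1 := by
      have : A.card ≤ m := by
        simpa using Finset.card_le_card (Finset.filter_subset _ (Finset.univ : Finset (Fin m)))
      omega
    calc ∑ j ∈ A, (N - d j) ≤ ∑ _j ∈ A, (N - 1) := by
          apply Finset.sum_le_sum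
          intro j hj
          have : d j ≠ 0 := by simp [hA] at hj; exact hj.1
          omega
      _ = A.card * (N-1) := by simp [Finset.sum_const, mul_comm]
      _ ≤ (m-1)*(N-1) := Nat.mul_le_mul_right _ hAle

lemma hlp_perj (N e d : ℕ) (hed : e ≤ d) (hN : 1 ≤ N) :
    (e:ℝ)/d ≤ (e:ℝ)/N + (if d = 0 then 0 else ((N - d : ℕ):ℝ))/N := by
  have hNpos : (0:ℝ) < N := by exact_mod_cast hN
  rcases Nat.eq_zero_or_pos d with h0 | hd
  · have he : e = 0 := by omega
    simp [h0, he]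
  have hdpos : (0:ℝ) < d := by exact_mod_cast hd
  rw [if_neg (by omega)]
  rcases le_or_gt N d with hNd | hdN
  · rw [Nat.sub_eq_zero_of_le hNd]
    have : (e:ℝ)/d ≤ (e:ℝ)/N :=
      div_le_div_of_nonneg_left (by positivity) hNpos (by exact_mod_cast hNd)
    simpa using this
  · have hc : ((N - d : ℕ):ℝ) = (N:ℝ) - d := by
      rw [Nat.cast_sub (le_of_lt hdN)]
    rw [hc, div_add_div _ _ (ne_of_gt hNpos) (ne_of_gt hNpos), div_le_div_iff₀ hdpos (by positivity)]
    have heR : (e:ℝ) ≤ d := by exact_mod_cast hed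
    have hdNR : (d:ℝ) ≤ N := by exact_mod_cast le_of_lt hdN
    nlinarith [mul_nonneg (sub_nonneg.2 heR) (sub_nonneg.2 hdNR), hNpos]

lemma hlp_prefix (n m N : ℕ) (hm : 1 ≤ m) (hmn : m ≤ n) (hN : N = n - m + 1)
    (g : Fin n → Fin m) (k : ℕ) (hk : k ≤ n) :
    ∑ i ∈ Finset.univ.filter (fun i : Fin n => (i:ℕ) < k),
        (1 : ℝ) / ((Finset.univ.filter (fun i' => g i' = g i)).card : ℝ)
      ≤ ∑ i ∈ Finset.univ.filter (fun i : Fin n => (i:ℕ) < k),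
        (if (i:ℕ) < m - 1 then (1:ℝ) else 1/(N:ℝ)) := by
  have hN1 : 1 ≤ N := by omega
  have hNpos : (0:ℝ) < N := by exact_mod_cast hN1
  set d : Fin m → ℕ := fun j => (Finset.univ.filter (fun i => g i = j)).card with hd
  have hd1 : ∀ i : Fin n, 1 ≤ d (g i) := by
    intro i
    apply Finset.card_pos.2 ⟨i, by simp⟩
  set S := Finset.univ.filter (fun i : Fin n => (i:ℕ) < k) with hS
  rcases le_or_gt k (m-1) with hkm | hkm
  · -- easy case: each term ≤ 1 and RHS terms are all 1
    apply Finset.sum_le_sum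
    intro i hi
    have him : (i:ℕ) < m - 1 := lt_of_lt_of_le (by simpa [hS] using hi) hkm
    rw [if_pos him]
    have h1 : (1:ℝ) ≤ (d (g i) : ℝ) := by exact_mod_cast hd1 i
    rw [div_le_one (by linarith)]
    exact h1
  · -- main case : m - 1 < k
    set e : Fin m → ℕ := fun j => (S.filter (fun i => g i = j)).card with he
    have hed : ∀ j, e j ≤ d j := by
      intro j
      exact Finset.card_le_card (Finset.filter_subset_filter _ (Finset.filter_subset _ _))
    have hesum : ∑ j, e j = k := by
      rw [← Finset.card_eq_sum_card_fiberwise (fun i (_ : i ∈ S) => Finset.mem_univ (g i))]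
      rw [hS]; exact hlp_card_lt n k hk
    have hdsum : ∑ j, d j = n := by
      rw [← Finset.card_eq_sum_card_fiberwise (fun i (_ : i ∈ Finset.univ) => Finset.mem_univ (g i))]
      simp
    -- LHS = ∑_j e j / d j
    have hfib : ∑ i ∈ S, (1 : ℝ) / ((Finset.univ.filter (fun i' => g i' = g i)).card : ℝ)
        = ∑ j : Fin m, (e j : ℝ) / (d j : ℝ) := by
      rw [← Finset.sum_fiberwise_of_maps_to (fun i (_ : i ∈ S) => Finset.mem_univ (g i))]
      apply Finset.sum_congr rfl
      intro j _
      have : ∀ i ∈ S.filter (fun i => g i = j),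
          (1 : ℝ) / ((Finset.univ.filter (fun i' => g i' = g i)).card : ℝ) = 1 / (d j : ℝ) := by
        intro i hi
        have : g i = j := (Finset.mem_filter.1 hi).2
        rw [hd, this]
      rw [Finset.sum_congr rfl this, Finset.sum_const, nsmul_eq_mul, mul_one_div]
    -- RHS = (m-1) + (k - (m-1))/N
    have hsplit := Finset.sum_filter_add_sum_filter_not S (fun i : Fin n => (i:ℕ) < m - 1)
      (fun i => (if (i:ℕ) < m - 1 then (1:ℝ) else 1/(N:ℝ)))
    have hfilt1 : S.filter (fun i : Fin n => (i:ℕ) < m - 1)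
        = Finset.univ.filter (fun i : Fin n => (i:ℕ) < m - 1) := by
      rw [hS, Finset.filter_filter]
      apply Finset.filter_congr
      intro i _
      constructor
      · exact fun h => h.2
      · exact fun h => ⟨lt_of_lt_of_le h (by omega), h⟩
    have hcard1 : (S.filter (fun i : Fin n => (i:ℕ) < m - 1)).card = m - 1 := by
      rw [hfilt1]; exact hlp_card_lt n (m-1) (by omega)
    have hcard2 : (S.filter (fun i : Fin n => ¬ (i:ℕ) < m - 1)).card = k - (m-1) := by
      have h := Finset.card_filter_add_card_filter_not
        (s := S) (p := fun i : Fin n => (i:ℕ) < m - 1)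
      have hSc : S.card = k := by rw [hS]; exact hlp_card_lt n k hk
      omega
    have hrhs : ∑ i ∈ S, (if (i:ℕ) < m - 1 then (1:ℝ) else 1/(N:ℝ))
        = ((m-1 : ℕ) : ℝ) + ((k - (m-1) : ℕ) : ℝ) * (1/(N:ℝ)) := by
      rw [← hsplit]
      congr 1
      · rw [Finset.sum_congr rfl (fun i hi => if_pos (Finset.mem_filter.1 hi).2), Finset.sum_const,
          hcard1, nsmul_eq_mul, mul_one]
      · rw [Finset.sum_congr rfl (fun i hi => if_neg (Finset.mem_filter.1 hi).2), Finset.sum_const,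
          hcard2, nsmul_eq_mul]
    rw [hfib, hrhs]
    -- chain of inequalities
    have step1 : ∑ j : Fin m, (e j : ℝ) / (d j : ℝ)
        ≤ ∑ j : Fin m, ((e j : ℝ)/(N:ℝ) + (if d j = 0 then 0 else ((N - d j : ℕ):ℝ))/(N:ℝ)) :=
      Finset.sum_le_sum (fun j _ => hlp_perj N (e j) (d j) (hed j) hN1)
    have step2 : ∑ j : Fin m, ((e j : ℝ)/(N:ℝ) + (if d j = 0 then 0 else ((N - d j : ℕ):ℝ))/(N:ℝ))
        = (k:ℝ)/(N:ℝ) + ((∑ j : Fin m, (if d j = 0 then 0 else N - d j) : ℕ) : ℝ)/(N:ℝ) := by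
      rw [Finset.sum_add_distrib, ← Finset.sum_div, ← Finset.sum_div]
      congr 2
      · rw [← hesum]; push_cast; ring
      · push_cast
        apply Finset.sum_congr rfl
        intro j _
        split_ifs <;> simp
    have step3 : ((∑ j : Fin m, (if d j = 0 then 0 else N - d j) : ℕ) : ℝ)
        ≤ (((m-1)*(N-1) : ℕ) : ℝ) := by
      exact_mod_cast hlp_W n m N hm hmn hN d hdsum
    have harith : (k:ℝ)/(N:ℝ) + (((m-1)*(N-1) : ℕ) : ℝ)/(N:ℝ)
        = ((m-1 : ℕ) : ℝ) + ((k - (m-1) : ℕ) : ℝ) * (1/(N:ℝ)) := by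
      have h1 : (((m-1)*(N-1) : ℕ) : ℝ) = ((m:ℝ)-1)*((N:ℝ)-1) := by
        push_cast [Nat.cast_sub hm, Nat.cast_sub hN1]
        ring
      have h2 : ((k - (m-1) : ℕ) : ℝ) = (k:ℝ) - ((m:ℝ)-1) := by
        push_cast [Nat.cast_sub (show m - 1 ≤ k by omega), Nat.cast_sub hm]
        ring
      have h3 : ((m-1 : ℕ) : ℝ) = (m:ℝ)-1 := by push_cast [Nat.cast_sub hm]; ring
      rw [h1, h2, h3]
      field_simp
      ring
    calc ∑ j : Fin m, (e j : ℝ) / (d j : ℝ)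
        ≤ (k:ℝ)/(N:ℝ) + ((∑ j : Fin m, (if d j = 0 then 0 else N - d j) : ℕ) : ℝ)/(N:ℝ) := by
          rw [← step2]; exact step1
      _ ≤ (k:ℝ)/(N:ℝ) + (((m-1)*(N-1) : ℕ) : ℝ)/(N:ℝ) := by
          gcongr
      _ = _ := harith

lemma hlp_TS_eq {n m : ℕ} (g : Fin n → Fin m) (v : Fin n → ℝ) :
    TS g (fun i _ => v i)
      = ∑ i : Fin n, v i / ((Finset.univ.filter (fun i' => g i' = g i)).card : ℝ) := by
  unfold TS
  rw [← Finset.sum_fiberwise_of_maps_to (fun i (_ : i ∈ Finset.univ) => Finset.mem_univ (g i))]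
  apply Finset.sum_congr rfl
  intro j _
  rw [Finset.sum_div]
  apply Finset.sum_congr rfl
  intro i hi
  rw [(Finset.mem_filter.1 hi).2]

/-- For `n ≥ m ≥ 1` and nonincreasing nonnegative weights
`v 0 ≥ v 1 ≥ ⋯ ≥ v (n-1) ≥ 0` (identical basestations), the allocation that puts user `j`
alone on basestation `j` for `j < m-1` and all remaining users on basestation `m-1`
attains the maximum of the time-sharing utility, and this maximum equals
`v 1 + ⋯ + v (m-1) + (1/(n-m+1)) (v m + ⋯ + v n)` (paper's 1-indexed notation). -/
theorem stmt1 (n m : ℕ) (hm : 1 ≤ m) (hmn : m ≤ n) (v : Fin n → ℝ)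
    (hmono : ∀ i j : Fin n, i ≤ j → v j ≤ v i) (hnn : ∀ i, 0 ≤ v i) :
    (∀ g : Fin n → Fin m, TS g (fun i _ => v i) ≤
        (∑ i ∈ Finset.univ.filter (fun i : Fin n => (i : ℕ) < m - 1), v i)
          + (1 / ((n : ℝ) - (m : ℝ) + 1)) *
            ∑ i ∈ Finset.univ.filter (fun i : Fin n => m - 1 ≤ (i : ℕ)), v i)
    ∧ TS (fun i : Fin n =>
          if h : (i : ℕ) < m - 1 then ⟨(i : ℕ), lt_of_lt_of_le h (Nat.sub_le m 1)⟩
          else ⟨m - 1, by omega⟩) (fun i _ => v i) =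
        (∑ i ∈ Finset.univ.filter (fun i : Fin n => (i : ℕ) < m - 1), v i)
          + (1 / ((n : ℝ) - (m : ℝ) + 1)) *
            ∑ i ∈ Finset.univ.filter (fun i : Fin n => m - 1 ≤ (i : ℕ)), v i := by
  set N : ℕ := n - m + 1 with hN
  have hN1 : 1 ≤ N := by omega
  have hNr : ((N : ℕ) : ℝ) = (n : ℝ) - (m : ℝ) + 1 := by
    rw [hN]; push_cast [Nat.cast_sub hmn]; ring
  set cstar : Fin n → ℝ := fun i => if (i:ℕ) < m - 1 then (1:ℝ) else 1/(N:ℝ) with hcstar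
  -- the RHS equals ∑ i, v i * cstar i
  have hrhs : ∑ i : Fin n, v i * cstar i
      = (∑ i ∈ Finset.univ.filter (fun i : Fin n => (i : ℕ) < m - 1), v i)
          + (1 / ((n : ℝ) - (m : ℝ) + 1)) *
            ∑ i ∈ Finset.univ.filter (fun i : Fin n => m - 1 ≤ (i : ℕ)), v i := by
    rw [← Finset.sum_filter_add_sum_filter_not Finset.univ (fun i : Fin n => (i:ℕ) < m - 1)
      (fun i => v i * cstar i)]
    congr 1
    · apply Finset.sum_congr rfl
      intro i hi
      rw [hcstar]
      simp only [if_pos (Finset.mem_filter.1 hi).2, mul_one]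
    · have hfeq : Finset.univ.filter (fun i : Fin n => ¬ (i:ℕ) < m - 1)
          = Finset.univ.filter (fun i : Fin n => m - 1 ≤ (i:ℕ)) := by
        apply Finset.filter_congr
        intro i _
        simp [not_lt]
      rw [hfeq, Finset.mul_sum]
      apply Finset.sum_congr rfl
      intro i hi
      have : ¬ (i:ℕ) < m - 1 := by
        have := (Finset.mem_filter.1 hi).2; omega
      rw [hcstar]
      simp only [if_neg this]
      rw [← hNr]
      ring
  -- upper bound for arbitrary g
  have hub : ∀ g : Fin n → Fin m,
      (∑ i : Fin n, v i / ((Finset.univ.filter (fun i' => g i' = g i)).card : ℝ))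
        ≤ ∑ i : Fin n, v i * cstar i := by
    intro g
    set D : Fin n → ℝ := fun i => ((Finset.univ.filter (fun i' => g i' = g i)).card : ℝ) with hD
    set F : Fin n → ℝ := fun i => 1 / D i - cstar i with hF
    set VV : ℕ → ℝ := fun kk => if h : kk < n then v ⟨kk, h⟩ else 0 with hVV
    set AA : ℕ → ℝ := fun kk => if h : kk < n then F ⟨kk, h⟩ else 0 with hAA
    have hVmono : ∀ kk, VV (kk+1) ≤ VV kk := by
      intro kk
      rw [hVV]
      by_cases h1 : kk + 1 < n
      · have h0 : kk < n := by omega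
        simp only [dif_pos h1, dif_pos h0]
        exact hmono ⟨kk, h0⟩ ⟨kk+1, h1⟩ (by simp [Fin.le_def])
      · by_cases h0 : kk < n
        · simp only [dif_neg h1, dif_pos h0]
          exact hnn _
        · simp [dif_neg h1, dif_neg h0]
    have hV0 : ∀ kk, 0 ≤ VV kk := by
      intro kk
      rw [hVV]
      by_cases h0 : kk < n
      · simp only [dif_pos h0]; exact hnn _
      · simp [dif_neg h0]
    have hpre : ∀ kk, kk ≤ n → ∑ i ∈ Finset.range kk, AA i ≤ 0 := by
      intro kk hkk
      rw [hAA, hlp_sum_range_eq n kk hkk F]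
      rw [hF]
      have := hlp_prefix n m N hm hmn hN g kk hkk
      have hsub : ∑ i ∈ Finset.univ.filter (fun i : Fin n => (i:ℕ) < kk),
          (1 / D i - cstar i)
          = (∑ i ∈ Finset.univ.filter (fun i : Fin n => (i:ℕ) < kk), 1 / D i)
            - ∑ i ∈ Finset.univ.filter (fun i : Fin n => (i:ℕ) < kk), cstar i :=
        Finset.sum_sub_distrib _ _
      rw [hsub]
      rw [sub_nonpos]
      exact this
    have habel := hlp_abel VV AA n hVmono hV0 hpre
    have hconv : ∑ i : Fin n, v i * F i = ∑ i ∈ Finset.range n, VV i * AA i := by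
      rw [← Fin.sum_univ_eq_sum_range (fun kk => VV kk * AA kk) n]
      apply Finset.sum_congr rfl
      intro i _
      rw [hVV, hAA]
      simp only [i.isLt, dif_pos, Fin.eta]
    have hkey : ∑ i : Fin n, v i * F i ≤ 0 := by rw [hconv]; exact habel
    have hexpand : ∑ i : Fin n, v i * F i
        = (∑ i : Fin n, v i / D i) - ∑ i : Fin n, v i * cstar i := by
      rw [← Finset.sum_sub_distrib]
      apply Finset.sum_congr rfl
      intro i _
      rw [hF]
      field_simp
    rw [hexpand] at hkey
    linarith
  constructor
  · intro g
    rw [hlp_TS_eq g v, ← hrhs]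
    exact hub g
  · set f : Fin n → Fin m := fun i : Fin n =>
      if h : (i : ℕ) < m - 1 then ⟨(i : ℕ), lt_of_lt_of_le h (Nat.sub_le m 1)⟩
      else ⟨m - 1, by omega⟩ with hf
    rw [hlp_TS_eq f v, ← hrhs]
    have hcardge : (Finset.univ.filter (fun i' : Fin n => ¬ (i':ℕ) < m - 1)).card = N := by
      have h := Finset.card_filter_add_card_filter_not
        (s := (Finset.univ : Finset (Fin n))) (p := fun i : Fin n => (i:ℕ) < m - 1)
      have h1 : ((Finset.univ : Finset (Fin n)).filter (fun i : Fin n => (i:ℕ) < m - 1)).card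
          = m - 1 := hlp_card_lt n (m-1) (by omega)
      have h2 : ((Finset.univ : Finset (Fin n))).card = n := by simp
      omega
    apply Finset.sum_congr rfl
    intro i _
    by_cases hi : (i:ℕ) < m - 1
    · have hfib : Finset.univ.filter (fun i' => f i' = f i) = {i} := by
        ext i'
        simp only [Finset.mem_filter, Finset.mem_univ, true_and, Finset.mem_singleton, hf]
        rw [Fin.ext_iff, Fin.ext_iff]
        split_ifs <;> simp_all <;> omega
      rw [hfib]
      simp [hcstar, if_pos hi]
    · have hfib : Finset.univ.filter (fun i' => f i' = f i)
          = Finset.univ.filter (fun i' : Fin n => ¬ (i':ℕ) < m - 1) := by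
        apply Finset.filter_congr
        intro i' _
        rw [hf]
        simp only []
        rw [Fin.ext_iff]
        split_ifs <;> simp_all <;> omega
      rw [hfib, hcardge]
      rw [hcstar]
      simp only [if_neg hi]
      rw [mul_one_div]
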